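/- Let (A, U) be a C*-dynamical system with δ(a) = U a U* an endomorphism of the unital commutative C*-algebra A ⊂ L(H), and let P = 1 - Q where Q is the carrier projection of the ideal ker δ = (1 - U*U)A ∩ A. Then U*U ≤ P, P commutes with A, and (ker δ)^⊥ = PA ∩ A. -/

import Mathlib

/-- for a C*-dynamical system `(A, U)` (A unital commutative, `U` a partial
isometry with `U A U* ⊆ A` and `U*U` commuting with `A`), let `Q` be the carrier projection of
`ker δ = {a ∈ A : U a U* = 0}` and `P = 1 - Q`. Then `U*U ≤ P`, `P` commutes with `A`, and
`(ker δ)^⊥ = PA ∩ A`. -/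
theorem stmt8 {H : Type*} [NormedAddCommGroup H] [InnerProductSpace ℂ H] [CompleteSpace H]
    (A : StarSubalgebra ℂ (H →L[ℂ] H))
    (hcommA : ∀ a ∈ A, ∀ b ∈ A, a * b = b * a)
    (U : H →L[ℂ] H) (hU : U * star U * U = U)
    (hA : ∀ a ∈ A, U * a * star U ∈ A)
    (hcomm : ∀ a ∈ A, star U * U * a = a * (star U * U))
    (Q : H →L[ℂ] H) (hQ1 : Q * Q = Q) (hQ2 : IsSelfAdjoint Q)
    (hQ3 : (LinearMap.range (Q : H →ₗ[ℂ] H) : Set H) =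
      closure (Submodule.span ℂ
        {x : H | ∃ b : H →L[ℂ] H, b ∈ A ∧ U * b * star U = 0 ∧ ∃ h : H, b h = x} : Set H)) :
    ((1 - Q) - star U * U).IsPositive ∧
    (∀ a ∈ A, (1 - Q) * a = a * (1 - Q)) ∧
    (∀ a ∈ A, ((∀ b ∈ A, U * b * star U = 0 → a * b = 0) ↔ ∃ c ∈ A, a = (1 - Q) * c)) := by
  set S : Set H := {x : H | ∃ b : H →L[ℂ] H, b ∈ A ∧ U * b * star U = 0 ∧ ∃ h : H, b h = x}
    with hSdef
  set E : H →L[ℂ] H := star U * U with hEdef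
  have hQsa : star Q = Q := hQ2
  have hEsa : star E = E := by rw [hEdef, star_mul, star_star]
  have hUE : U * E = U := by rw [hEdef, ← mul_assoc, hU]
  have hEU : E * star U = star U := by
    have := congrArg star hUE
    rwa [star_mul, hEsa] at this
  have hEE : E * E = E := by
    have h : E * E = E * (star U * U) := rfl
    rw [h, ← mul_assoc, hEU]
  -- E kills elements of ker δ
  have hUb : ∀ b : H →L[ℂ] H, b ∈ A → U * b * star U = 0 → U * b = 0 := by
    intro b hb h0
    have h1 : U * b * E = 0 := by
      rw [hEdef, ← mul_assoc, h0, zero_mul]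
    have h2 : U * b * E = U * b := by
      rw [mul_assoc, ← hcomm b hb, ← mul_assoc, hUE]
    rw [← h2, h1]
  have hEb : ∀ b : H →L[ℂ] H, b ∈ A → U * b * star U = 0 → E * b = 0 := by
    intro b hb h0
    rw [hEdef, mul_assoc, hUb b hb h0, mul_zero]
  -- δ is multiplicative
  have hdmul : ∀ b ∈ A, ∀ c ∈ A,
      (U * b * star U) * (U * c * star U) = U * (b * c) * star U := by
    intro b hb c hc
    have h1 : star U * (U * (c * star U)) = c * star U := by
      rw [← mul_assoc, ← hEdef, ← mul_assoc, hcomm c hc, mul_assoc, hEU]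
    calc (U * b * star U) * (U * c * star U)
        = U * (b * (star U * (U * (c * star U)))) := by
          simp only [mul_assoc]
      _ = U * (b * (c * star U)) := by rw [h1]
      _ = U * (b * c) * star U := by simp only [mul_assoc]
  -- the closed subspace K
  set M : Submodule ℂ H := (Submodule.span ℂ S).topologicalClosure with hMdef
  have hMco : (M : Set H) = closure (Submodule.span ℂ S : Set H) :=
    Submodule.topologicalClosure_coe _
  have hMclosed : IsClosed (M : Set H) := Submodule.isClosed_topologicalClosure _
  have hQ3' : (LinearMap.range (Q : H →ₗ[ℂ] H) : Set H) = (M : Set H) := by rw [hQ3, hMco]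
  have hQmem : ∀ y : H, Q y ∈ M := by
    intro y
    have : Q y ∈ (LinearMap.range (Q : H →ₗ[ℂ] H) : Set H) := ⟨y, rfl⟩
    rwa [hQ3'] at this
  have hQfix : ∀ x ∈ M, Q x = x := by
    intro x hx
    have hx' : x ∈ (LinearMap.range (Q : H →ₗ[ℂ] H) : Set H) := by rw [hQ3']; exact hx
    obtain ⟨y, hy⟩ := hx'
    have h : Q (Q y) = Q y := by
      have := DFunLike.congr_fun hQ1 y
      simpa using this
    rw [← hy]; exact h
  -- a continuous linear map vanishing on S vanishes on M
  have hvanish : ∀ T : H →L[ℂ] H, (∀ s ∈ S, T s = 0) → ∀ x ∈ M, T x = 0 := by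
    intro T hT x hx
    have h1 : Submodule.span ℂ S ≤ LinearMap.ker (T : H →ₗ[ℂ] H) := Submodule.span_le.2 (fun s hs => hT s hs)
    have h2 : (M : Set H) ⊆ (LinearMap.ker (T : H →ₗ[ℂ] H) : Set H) := by
      rw [hMco]
      exact closure_minimal h1 (ContinuousLinearMap.isClosed_ker T)
    exact h2 hx
  -- A-invariance of M
  have hinv : ∀ a ∈ A, ∀ x ∈ M, a x ∈ M := by
    intro a ha x hx
    set N : Submodule ℂ H := Submodule.comap (a : H →ₗ[ℂ] H) M with hNdef
    have hNclosed : IsClosed (N : Set H) := hMclosed.preimage a.continuous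
    have hSN : S ⊆ (N : Set H) := by
      rintro s ⟨b, hb, hb0, h, rfl⟩
      have hab : a * b ∈ A := mul_mem ha hb
      have hab0 : U * (a * b) * star U = 0 := by
        rw [← hdmul a ha b hb, hb0, mul_zero]
      have : (a * b) h ∈ S := ⟨a * b, hab, hab0, h, rfl⟩
      have hmem : (a * b) h ∈ M :=
        (Submodule.span ℂ S).le_topologicalClosure (Submodule.subset_span this)
      exact hmem
    have h1 : Submodule.span ℂ S ≤ N := Submodule.span_le.2 hSN
    have h2 : (M : Set H) ⊆ (N : Set H) := by
      rw [hMco]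
      exact closure_minimal h1 hNclosed
    exact h2 hx
  -- Q commutes with A
  have hQhalf : ∀ a ∈ A, Q * a * Q = a * Q := by
    intro a ha
    ext y
    simp only [ContinuousLinearMap.mul_apply]
    exact hQfix _ (hinv a ha _ (hQmem y))
  have hQcomm : ∀ a ∈ A, Q * a = a * Q := by
    intro a ha
    have h1 : Q * star a * Q = star a * Q := hQhalf (star a) (star_mem ha)
    have h2 := congrArg star h1
    simp only [star_mul, star_star, hQsa] at h2
    -- h2 : Q * (a * Q) = Q * a
    rw [← mul_assoc] at h2
    rw [← h2, hQhalf a ha]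
  -- E * Q = 0
  have hEQ : E * Q = 0 := by
    ext y
    simp only [ContinuousLinearMap.mul_apply, ContinuousLinearMap.zero_apply]
    refine hvanish E ?_ _ (hQmem y)
    rintro s ⟨b, hb, hb0, h, rfl⟩
    have h2 := DFunLike.congr_fun (hEb b hb hb0) h
    simpa using h2
  have hQE : Q * E = 0 := by
    have := congrArg star hEQ
    rwa [star_mul, hQsa, hEsa, star_zero] at this
  -- the projection P' = 1 - Q - E
  set P' : H →L[ℂ] H := 1 - Q - E with hP'def
  have hP'sa : star P' = P' := by
    simp [hP'def, star_sub, hQsa, hEsa]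
  have hP'idem : P' * P' = P' := by
    simp only [hP'def, sub_mul, mul_sub, one_mul, mul_one, hQ1, hEE, hEQ, hQE]
    abel
  have hpos : P'.IsPositive := by
    have h1 : ((1 : H →L[ℂ] H)).IsPositive := ContinuousLinearMap.isPositive_one
    have h2 := h1.adjoint_conj P'
    have h3 : (ContinuousLinearMap.adjoint P' ∘L (1 : H →L[ℂ] H) ∘L P') = P' := by
      rw [← ContinuousLinearMap.star_eq_adjoint, hP'sa]
      ext x
      simp only [ContinuousLinearMap.comp_apply, ContinuousLinearMap.one_apply]
      rw [← ContinuousLinearMap.mul_apply, hP'idem]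
    rwa [h3] at h2
  refine ⟨?_, ?_, ?_⟩
  · exact hpos
  · intro a ha
    rw [sub_mul, mul_sub, one_mul, mul_one, hQcomm a ha]
  · intro a ha
    constructor
    · intro hann
      refine ⟨a, ha, ?_⟩
      have haQ : a * Q = 0 := by
        ext y
        simp only [ContinuousLinearMap.mul_apply, ContinuousLinearMap.zero_apply]
        refine hvanish a ?_ _ (hQmem y)
        rintro s ⟨b, hb, hb0, h, rfl⟩
        have h2 := DFunLike.congr_fun (hann b hb hb0) h
        simpa using h2
      have hQa : Q * a = 0 := by rw [hQcomm a ha, haQ]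
      rw [sub_mul, one_mul, hQa, sub_zero]
    · rintro ⟨c, hc, rfl⟩
      intro b hb hb0
      have hcb : c * b ∈ A := mul_mem hc hb
      have hcb0 : U * (c * b) * star U = 0 := by
        rw [← hdmul c hc b hb, hb0, mul_zero]
      have hQcb : Q * (c * b) = c * b := by
        ext y
        simp only [ContinuousLinearMap.mul_apply]
        refine hQfix _ ?_
        exact (Submodule.span ℂ S).le_topologicalClosure
          (Submodule.subset_span ⟨c * b, hcb, hcb0, _, rfl⟩)
      rw [mul_assoc, sub_mul, one_mul, hQcb, sub_self]
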